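/- arXiv:2201.06062 — 3 statements merged into one kernel-verified Lean document; each statement's English description precedes it below -/
import Mathlib

section
/- Let n ≥ 1, let v_1, …, v_m ∈ ℝ^n be vectors, and let w_1, …, w_m > 0 be positive real weights. Suppose that (i) for every nonzero proper ℝ-linear subspace W ⊊ ℝ^{n+1} one has (1/dim_ℝ W) · Σ_{k : (v_k, −1) ∈ W} w_k ≤ (1/(n+1)) · Σ_{k=1}^m w_k, and (ii) whenever equality holds in (i) for some W, there exists an ℝ-linear subspace W′ ⊊ ℝ^{n+1} complementary to W (i.e. W ∩ W′ = 0 and W + W′ = ℝ^{n+1}) for which equality also holds. Then, whenever (1/(dim A + 1)) · Σ_{k : v_k ∈ A} w_k = (1/(n+1)) · Σ_{k=1}^m w_k for some proper affine subspace A ⊊ ℝ^n, there exists a proper affine subspace A′ ⊊ ℝ^n complementary to A with (1/(dim A′ + 1)) · Σ_{k : v_k ∈ A′} w_k = (1/(n+1)) · Σ_{k=1}^m w_k. -/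
open MeasureTheory Module
open scoped RealInnerProductSpace

noncomputable section

/-- `ℝ^n` with the standard Euclidean structure. -/
abbrev Euc (n : ℕ) : Type := EuclideanSpace ℝ (Fin n)

/-- A point of `ℝ^n` is a lattice point if all of its coordinates are integers. -/
def IsLatticePt {n : ℕ} (x : Euc n) : Prop := ∀ i, ∃ z : ℤ, x i = (z : ℝ)

/-- A vector of `ℤ^n` is primitive if it is nonzero and is not a positive integer multiple
`c • w` (with `c ≠ 1`) of a lattice vector `w`. -/
def IsPrimitiveVec {n : ℕ} (v : Euc n) : Prop :=
  IsLatticePt v ∧ v ≠ 0 ∧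
    ∀ (c : ℕ) (w : Euc n), IsLatticePt w → v = (c : ℝ) • w → c = 1

/-- A family of `n` lattice vectors is a `ℤ`-basis of `ℤ^n`. -/
def IsZBasis {n : ℕ} (d : Fin n → Euc n) : Prop :=
  (∀ i, IsLatticePt (d i)) ∧ LinearIndependent ℝ d ∧
    ∀ x : Euc n, IsLatticePt x → ∃ a : Fin n → ℤ, x = ∑ i, (a i : ℝ) • d i

/-- An edge of a polytope `P`: a nonempty exposed face whose affine span has dimension `1`. -/
def IsEdgeOf {n : ℕ} (P E : Set (Euc n)) : Prop :=
  IsExposed ℝ P E ∧ E.Nonempty ∧ Module.finrank ℝ (affineSpan ℝ E).direction = 1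

/-- A full-dimensional lattice polytope `P ⊆ ℝ^n`, together with its `m` facets
`facet 1, …, facet m`, their primitive inner normals `v k` and the integers `c k`,
so that `P = {x | ∀ k, ⟪x, v k⟫ ≥ -c k}` and `facet k = {x ∈ P | ⟪x, v k⟫ = -c k}`
is `(n-1)`-dimensional (hence the `facet k` are precisely the facets of `P`). -/
structure LatticePolytope (n m : ℕ) where
  P : Set (Euc n)
  facet : Fin m → Set (Euc n)
  v : Fin m → Euc n
  c : Fin m → ℤ
  isPolytope : ∃ S : Finset (Euc n), (∀ x ∈ S, IsLatticePt x) ∧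
    P = convexHull ℝ (S : Set (Euc n))
  fullDim : (interior P).Nonempty
  v_primitive : ∀ k, IsPrimitiveVec (v k)
  v_injective : Function.Injective v
  halfspaces : P = {x : Euc n | ∀ k, -(c k : ℝ) ≤ ⟪x, v k⟫}
  facet_def : ∀ k, facet k = {x ∈ P | ⟪x, v k⟫ = -(c k : ℝ)}
  facet_dim : ∀ k, Module.finrank ℝ (affineSpan ℝ (facet k)).direction = n - 1

namespace LatticePolytope

variable {n m : ℕ}

/-- A lattice polytope is reflexive if all the `c k` equal `1`. -/
def Reflexive (Q : LatticePolytope n m) : Prop := ∀ k, Q.c k = 1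

/-- A lattice polytope is smooth if at every vertex (extreme point) `u`, the primitive
direction vectors of the edges of `P` emanating from `u` form a `ℤ`-basis of `ℤ^n`. -/
def Smooth (Q : LatticePolytope n m) : Prop :=
  ∀ u ∈ Set.extremePoints ℝ Q.P, ∃ d : Fin n → Euc n,
    IsZBasis d ∧ (∀ i, IsPrimitiveVec (d i)) ∧
    (∀ i, ∃ E : Set (Euc n), IsEdgeOf Q.P E ∧ u ∈ E ∧ ∃ t : ℝ, 0 < t ∧ u + t • d i ∈ E) ∧
    (∀ E : Set (Euc n), IsEdgeOf Q.P E → u ∈ E →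
      ∃ i, (affineSpan ℝ E).direction = Submodule.span ℝ {d i})

/-- The barycenter of the polytope is at the origin: `∫_P x dx = 0`. -/
def Centered (Q : LatticePolytope n m) : Prop := ∫ x in Q.P, x = (0 : Euc n)

/-- The lattice volume of the facet `facet k`: its `(n-1)`-dimensional Hausdorff measure
divided by the Euclidean norm of the primitive normal `v k`. -/
def facetVol (Q : LatticePolytope n m) (k : Fin m) : ℝ :=
  (μH[(n : ℝ) - 1] (Q.facet k)).toReal / ‖Q.v k‖

/-- `ℓ` is the lattice length of the facet (side) `facet k`: its one-dimensional Hausdorff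
measure divided by the Euclidean norm of a primitive direction vector of the side. -/
def IsLatticeLength (Q : LatticePolytope n m) (k : Fin m) (ℓ : ℝ) : Prop :=
  ∃ d : Euc n, IsPrimitiveVec d ∧ d ∈ (affineSpan ℝ (Q.facet k)).direction ∧
    ℓ = (μH[(1 : ℝ)] (Q.facet k)).toReal / ‖d‖

end LatticePolytope

open Classical in
/-- The sum of the weights `w k` over all indices `k` satisfying the predicate `p`. -/
def wsum {m : ℕ} (w : Fin m → ℝ) (p : Fin m → Prop) : ℝ :=
  ∑ k ∈ Finset.univ.filter p, w k

/-- The embedding `v ↦ (v, -1)` of `ℝ^n` into `ℝ^(n+1)`. -/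
def snocNegOne {n : ℕ} (v : Euc n) : Euc (n + 1) :=
  (EuclideanSpace.equiv (Fin (n + 1)) ℝ).symm
    (Fin.snoc (EuclideanSpace.equiv (Fin n) ℝ v) (-1))

/-- The standard inclusion `ℝ^N ⊆ ℂ^N`, sending a real vector to the complex vector with
the same (real) coordinates. -/
def complexify {N : ℕ} (x : EuclideanSpace ℝ (Fin N)) : EuclideanSpace ℂ (Fin N) :=
  (EuclideanSpace.equiv (Fin N) ℂ).symm fun i => ((EuclideanSpace.equiv (Fin N) ℝ) x i : ℂ)

namespace AffAux
variable {n : ℕ}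

lemma snoc_last (v : Euc n) : snocNegOne v (Fin.last n) = -1 := by simp [snocNegOne]
lemma snoc_castSucc (v : Euc n) (i : Fin n) : snocNegOne v (i.castSucc) = v i := by
  simp [snocNegOne]

def ι : Euc n →ₗ[ℝ] Euc (n + 1) where
  toFun x := (EuclideanSpace.equiv (Fin (n + 1)) ℝ).symm
    (Fin.snoc (EuclideanSpace.equiv (Fin n) ℝ x) 0)
  map_add' x y := by
    ext i
    induction i using Fin.lastCases with
    | last => simp
    | cast i => simp
  map_smul' c x := by
    ext i
    induction i using Fin.lastCases with
    | last => simp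
    | cast i => simp

lemma ι_last (x : Euc n) : ι x (Fin.last n) = 0 := by simp [ι]
lemma ι_castSucc (x : Euc n) (i : Fin n) : ι x (i.castSucc) = x i := by simp [ι]

lemma ι_inj : Function.Injective (ι (n := n)) := by
  intro x y h
  ext i
  have := congrArg (fun f : Euc (n + 1) => f i.castSucc) h
  simpa [ι_castSucc] using this

lemma snoc_eq (x a : Euc n) : snocNegOne x = ι (x - a) + snocNegOne a := by
  ext i
  induction i using Fin.lastCases with
  | last => simp [snoc_last, ι_last]
  | cast i => simp [snoc_castSucc, ι_castSucc]

lemma exists_snoc (p : Euc (n + 1)) (hp : p (Fin.last n) = -1) :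
    ∃ x : Euc n, snocNegOne x = p := by
  refine ⟨(EuclideanSpace.equiv (Fin n) ℝ).symm (fun i => p i.castSucc), ?_⟩
  ext i
  induction i using Fin.lastCases with
  | last => simp [snoc_last, hp]
  | cast i => simp [snoc_castSucc]

lemma snoc_ne_zero (x : Euc n) : snocNegOne x ≠ 0 := by
  intro h
  have := congrArg (fun f : Euc (n + 1) => f (Fin.last n)) h
  rw [snoc_last] at this
  norm_num at this

/-- the affine subspace `{x | (x,-1) ∈ U}`. -/
def aff (U : Submodule ℝ (Euc (n + 1))) : AffineSubspace ℝ (Euc n) where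
  carrier := {x | snocNegOne x ∈ U}
  smul_vsub_vadd_mem' c x y z hx hy hz := by
    show snocNegOne (c • (x - y) + z) ∈ U
    have : snocNegOne (c • (x - y) + z)
        = c • (snocNegOne x - snocNegOne y) + snocNegOne z := by
      ext i
      induction i using Fin.lastCases with
      | last => simp [snoc_last]
      | cast i => simp [snoc_castSucc]
    rw [this]
    exact U.add_mem (U.smul_mem _ (U.sub_mem hx hy)) hz

lemma mem_aff {U : Submodule ℝ (Euc (n + 1))} {x : Euc n} :
    x ∈ aff U ↔ snocNegOne x ∈ U := Iff.rfl

/-- decomposition of the span of the lift of an affine subspace -/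
lemma span_eq_sup (A : AffineSubspace ℝ (Euc n)) {a : Euc n} (ha : a ∈ A) :
    Submodule.span ℝ (snocNegOne '' (A : Set (Euc n)))
      = A.direction.map ι ⊔ Submodule.span ℝ {snocNegOne a} := by
  apply le_antisymm
  · rw [Submodule.span_le]
    rintro _ ⟨x, hx, rfl⟩
    rw [snoc_eq x a]
    exact Submodule.add_mem _
      (Submodule.mem_sup_left (Submodule.mem_map_of_mem
        (AffineSubspace.vsub_mem_direction hx ha)))
      (Submodule.mem_sup_right (Submodule.mem_span_singleton_self _))
  · rw [sup_le_iff]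
    constructor
    · rintro _ ⟨d, hd, rfl⟩
      have hmem : a + d ∈ A := by
        have := AffineSubspace.vadd_mem_of_mem_direction hd ha
        rwa [vadd_eq_add, add_comm] at this
      have : ι d = snocNegOne (a + d) - snocNegOne a := by
        rw [snoc_eq (a + d) a, add_sub_cancel_left, add_sub_cancel_right]
      rw [this]
      exact Submodule.sub_mem _ (Submodule.subset_span ⟨a + d, hmem, rfl⟩)
        (Submodule.subset_span ⟨a, ha, rfl⟩)
    · rw [Submodule.span_le, Set.singleton_subset_iff]
      exact Submodule.subset_span ⟨a, ha, rfl⟩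


lemma map_ι_inf_span_eq_bot (D : Submodule ℝ (Euc n)) (a : Euc n) :
    D.map ι ⊓ Submodule.span ℝ {snocNegOne a} = ⊥ := by
  rw [eq_bot_iff]
  rintro x hx
  rw [Submodule.mem_inf] at hx
  obtain ⟨hx1, hx2⟩ := hx
  rw [Submodule.mem_span_singleton] at hx2
  obtain ⟨c, rfl⟩ := hx2
  obtain ⟨d, hd, hde⟩ := hx1
  have hlast : c * (-1) = 0 := by
    have := congrArg (fun f : Euc (n + 1) => f (Fin.last n)) hde
    rw [ι_last] at this
    simpa [snoc_last] using this.symm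
  have hc : c = 0 := by linarith [hlast]
  simp [hc]

lemma finrank_span_snoc (A : AffineSubspace ℝ (Euc n)) {a : Euc n} (ha : a ∈ A) :
    finrank ℝ (Submodule.span ℝ (snocNegOne '' (A : Set (Euc n))))
      = finrank ℝ A.direction + 1 := by
  rw [span_eq_sup A ha]
  have h1 : finrank ℝ (A.direction.map ι) = finrank ℝ A.direction :=
    (LinearEquiv.finrank_eq (Submodule.equivMapOfInjective ι ι_inj A.direction)).symm
  have h2 : finrank ℝ (Submodule.span ℝ ({snocNegOne a} : Set (Euc (n+1)))) = 1 :=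
    finrank_span_singleton (snoc_ne_zero a)
  have := Submodule.finrank_sup_add_finrank_inf_eq (A.direction.map ι)
    (Submodule.span ℝ {snocNegOne a})
  rw [map_ι_inf_span_eq_bot, finrank_bot, h1, h2] at this
  omega

lemma mem_iff_snoc_mem (A : AffineSubspace ℝ (Euc n)) {a : Euc n} (ha : a ∈ A) (x : Euc n) :
    x ∈ A ↔ snocNegOne x ∈ Submodule.span ℝ (snocNegOne '' (A : Set (Euc n))) := by
  constructor
  · intro hx; exact Submodule.subset_span ⟨x, hx, rfl⟩
  · intro hx
    rw [span_eq_sup A ha, Submodule.mem_sup] at hx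
    obtain ⟨y, hy, z, hz, hxyz⟩ := hx
    obtain ⟨d, hd, rfl⟩ := hy
    rw [Submodule.mem_span_singleton] at hz
    obtain ⟨c, rfl⟩ := hz
    have hc : c = 1 := by
      have := congrArg (fun f : Euc (n + 1) => f (Fin.last n)) hxyz
      simp only [snoc_last] at this
      have h2 : ι d (Fin.last n) + c * (-1) = -1 := by
        simpa [snoc_last] using this
      rw [ι_last] at h2
      linarith
    subst hc
    rw [one_smul] at hxyz
    have : ι (x - a) = ι d := by
      rw [snoc_eq x a] at hxyz
      exact add_right_cancel hxyz.symm
    have hxa : x - a ∈ A.direction := ι_inj this ▸ hd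
    have := AffineSubspace.vadd_mem_of_mem_direction hxa ha
    rwa [vadd_eq_add, sub_add_cancel] at this

lemma span_aff (U : Submodule ℝ (Euc (n + 1))) {q : Euc (n + 1)} (hq : q ∈ U)
    (hql : q (Fin.last n) ≠ 0) :
    Submodule.span ℝ (snocNegOne '' ((aff U : AffineSubspace ℝ (Euc n)) : Set (Euc n))) = U := by
  have hp : ∃ p ∈ U, p (Fin.last n) = -1 := by
    refine ⟨(-(q (Fin.last n))⁻¹) • q, U.smul_mem _ hq, ?_⟩
    have : ((-(q (Fin.last n))⁻¹) • q) (Fin.last n) = -(q (Fin.last n))⁻¹ * q (Fin.last n) := rfl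
    rw [this]
    field_simp
  obtain ⟨p, hpU, hpl⟩ := hp
  obtain ⟨xp, hxp⟩ := exists_snoc p hpl
  apply le_antisymm
  · rw [Submodule.span_le]
    rintro _ ⟨x, hx, rfl⟩
    exact hx
  · intro u hu
    set t := u (Fin.last n) with ht
    have hup : u + t • p ∈ U := U.add_mem hu (U.smul_mem _ hpU)
    have hupp : u + t • p + p ∈ U := U.add_mem hup hpU
    have hlast : (u + t • p + p) (Fin.last n) = -1 := by
      have : (u + t • p + p) (Fin.last n) = u (Fin.last n) + t * p (Fin.last n) + p (Fin.last n) := rfl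
      rw [this, hpl]; ring
    obtain ⟨x1, hx1⟩ := exists_snoc _ hlast
    have hx1U : x1 ∈ aff U := by rw [mem_aff, hx1]; exact hupp
    have hmem1 : u + t • p + p ∈ Submodule.span ℝ (snocNegOne '' ((aff U : AffineSubspace ℝ (Euc n)) : Set (Euc n))) := by
      rw [← hx1]; exact Submodule.subset_span ⟨x1, hx1U, rfl⟩
    have hxpU : xp ∈ aff U := by rw [mem_aff, hxp]; exact hpU
    have hmem2 : p ∈ Submodule.span ℝ (snocNegOne '' ((aff U : AffineSubspace ℝ (Euc n)) : Set (Euc n))) := by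
      rw [← hxp]; exact Submodule.subset_span ⟨xp, hxpU, rfl⟩
    have : u = (u + t • p + p) - (1 + t) • p := by
      rw [add_smul, one_smul]; abel
    rw [this]
    exact Submodule.sub_mem _ hmem1 (Submodule.smul_mem _ _ hmem2)


lemma aff_nonempty {U : Submodule ℝ (Euc (n + 1))} {q : Euc (n + 1)} (hq : q ∈ U)
    (hql : q (Fin.last n) ≠ 0) : ∃ x : Euc n, x ∈ aff U := by
  have hml : ((-(q (Fin.last n))⁻¹) • q) (Fin.last n) = -1 := by
    have : ((-(q (Fin.last n))⁻¹) • q) (Fin.last n)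
        = -(q (Fin.last n))⁻¹ * q (Fin.last n) := rfl
    rw [this]; field_simp
  obtain ⟨x, hx⟩ := exists_snoc _ hml
  exact ⟨x, by rw [mem_aff, hx]; exact U.smul_mem _ hq⟩

/-- the key construction: from a complementary linear equality case with a vector of
nonzero last coordinate, build the complementary affine equality case. -/
lemma build {m : ℕ} (v : Fin m → Euc n) (w : Fin m → ℝ) (R : ℝ)
    (W U : Submodule ℝ (Euc (n + 1)))
    (hinf : W ⊓ U = ⊥) (hsup : W ⊔ U = ⊤) (hUtop : U ≠ ⊤)
    {q : Euc (n + 1)} (hq : q ∈ U) (hql : q (Fin.last n) ≠ 0)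
    (heq : (1 / (finrank ℝ U : ℝ)) * wsum w (fun k => snocNegOne (v k) ∈ U) = R) :
    ∃ A' : AffineSubspace ℝ (Euc n),
      (A' : Set (Euc n)).Nonempty ∧ (A' : Set (Euc n)) ≠ Set.univ ∧
      W ⊓ Submodule.span ℝ (snocNegOne '' (A' : Set (Euc n))) = ⊥ ∧
      W ⊔ Submodule.span ℝ (snocNegOne '' (A' : Set (Euc n))) = ⊤ ∧
      (1 / ((finrank ℝ A'.direction : ℝ) + 1)) * wsum w (fun k => v k ∈ A') = R := by
  obtain ⟨a', ha'⟩ := aff_nonempty hq hql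
  have hspan : Submodule.span ℝ (snocNegOne '' ((aff U : AffineSubspace ℝ (Euc n)) : Set (Euc n))) = U :=
    span_aff U hq hql
  have hrk : finrank ℝ U = finrank ℝ (aff U).direction + 1 := by
    have h := finrank_span_snoc (aff U) ha'
    rwa [hspan] at h
  refine ⟨aff U, ⟨a', ha'⟩, ?_, by rw [hspan]; exact hinf, by rw [hspan]; exact hsup, ?_⟩
  · intro hU
    apply hUtop
    rw [AffineSubspace.coe_eq_univ_iff] at hU
    apply Submodule.eq_top_of_finrank_eq
    rw [hrk, hU, AffineSubspace.direction_top, finrank_top, finrank_euclideanSpace_fin,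
      finrank_euclideanSpace_fin]
  · have hcast : ((finrank ℝ U : ℝ)) = (finrank ℝ (aff U).direction : ℝ) + 1 := by
      rw [hrk]; push_cast; ring
    rw [← heq, hcast]
    congr 1

open Classical in
lemma wsum_nonneg {m : ℕ} {w : Fin m → ℝ} (hw : ∀ k, 0 ≤ w k) (p : Fin m → Prop) :
    0 ≤ wsum w p := by
  unfold wsum
  exact Finset.sum_nonneg fun k _ => hw k

open Classical in
lemma wsum_le {m : ℕ} {w : Fin m → ℝ} (hw : ∀ k, 0 ≤ w k) (p : Fin m → Prop) :
    wsum w p ≤ ∑ k, w k := by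
  unfold wsum
  exact Finset.sum_le_sum_of_subset_of_nonneg (Finset.filter_subset _ _) fun k _ _ => hw k

open Classical in
lemma wsum_false {m : ℕ} (w : Fin m → ℝ) {p : Fin m → Prop} (hp : ∀ k, ¬ p k) :
    wsum w p = 0 := by
  unfold wsum
  rw [Finset.filter_false_of_mem fun k _ => hp k, Finset.sum_empty]

end AffAux

/-- If positive weights `w_k` attached to vectors `v_k ∈ ℝ^n` satisfy the linear subspace
concentration inequality in `ℝ^(n+1)` for the lifted vectors `(v_k, -1)`, with the property
that any equality case admits a complementary equality case, then any equality case of the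
affine subspace concentration inequality in `ℝ^n` admits a complementary proper affine
subspace which is again an equality case.  (Two affine subspaces `A, A'` of `ℝ^n` are
complementary when the linear spans of their images under `v ↦ (v,-1)` are complementary
linear subspaces of `ℝ^(n+1)`.) -/
theorem affine_equality_of_linear_equality
    {n m : ℕ} (hn : 1 ≤ n) (v : Fin m → Euc n) (w : Fin m → ℝ) (hw : ∀ k, 0 < w k)
    (hyp : ∀ W : Submodule ℝ (Euc (n + 1)), W ≠ ⊥ → W ≠ ⊤ →
      (1 / (Module.finrank ℝ W : ℝ)) * wsum w (fun k => snocNegOne (v k) ∈ W) ≤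
        (1 / ((n : ℝ) + 1)) * ∑ k, w k)
    (hyp_eq : ∀ W : Submodule ℝ (Euc (n + 1)), W ≠ ⊥ → W ≠ ⊤ →
      (1 / (Module.finrank ℝ W : ℝ)) * wsum w (fun k => snocNegOne (v k) ∈ W) =
        (1 / ((n : ℝ) + 1)) * ∑ k, w k →
      ∃ W' : Submodule ℝ (Euc (n + 1)), W' ≠ ⊤ ∧ W ⊓ W' = ⊥ ∧ W ⊔ W' = ⊤ ∧
        (1 / (Module.finrank ℝ W' : ℝ)) * wsum w (fun k => snocNegOne (v k) ∈ W') =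
          (1 / ((n : ℝ) + 1)) * ∑ k, w k) :
    ∀ A : AffineSubspace ℝ (Euc n),
      (A : Set (Euc n)).Nonempty → (A : Set (Euc n)) ≠ Set.univ →
      (1 / ((Module.finrank ℝ A.direction : ℝ) + 1)) * wsum w (fun k => v k ∈ A) =
        (1 / ((n : ℝ) + 1)) * ∑ k, w k →
      ∃ A' : AffineSubspace ℝ (Euc n),
        (A' : Set (Euc n)).Nonempty ∧ (A' : Set (Euc n)) ≠ Set.univ ∧
        Submodule.span ℝ (snocNegOne '' (A : Set (Euc n))) ⊓
            Submodule.span ℝ (snocNegOne '' (A' : Set (Euc n))) = ⊥ ∧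
        Submodule.span ℝ (snocNegOne '' (A : Set (Euc n))) ⊔
            Submodule.span ℝ (snocNegOne '' (A' : Set (Euc n))) = ⊤ ∧
        (1 / ((Module.finrank ℝ A'.direction : ℝ) + 1)) * wsum w (fun k => v k ∈ A') =
          (1 / ((n : ℝ) + 1)) * ∑ k, w k := by
  intro A hAne hAuniv hAeq
  obtain ⟨a, ha⟩ := hAne
  have haA : a ∈ A := ha
  set W := Submodule.span ℝ (snocNegOne '' (A : Set (Euc n))) with hWdef
  have hrank : Module.finrank ℝ W = Module.finrank ℝ A.direction + 1 :=
    AffAux.finrank_span_snoc A haA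
  have hpW : snocNegOne a ∈ W := Submodule.subset_span ⟨a, haA, rfl⟩
  have hWbot : W ≠ ⊥ := by
    intro h
    rw [h, Submodule.mem_bot] at hpW
    exact AffAux.snoc_ne_zero a hpW
  have hdirne : A.direction ≠ ⊤ := by
    intro h
    apply hAuniv
    rw [Set.eq_univ_iff_forall]
    intro x
    have hx : x - a ∈ A.direction := by rw [h]; trivial
    have := AffineSubspace.vadd_mem_of_mem_direction hx haA
    rwa [vadd_eq_add, sub_add_cancel] at this
  have hdirlt : Module.finrank ℝ A.direction < n := by
    have := Submodule.finrank_lt hdirne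
    rwa [finrank_euclideanSpace_fin] at this
  have hWtop : W ≠ ⊤ := by
    intro h
    have h2 : Module.finrank ℝ W = n + 1 := by
      rw [h, finrank_top, finrank_euclideanSpace_fin]
    omega
  have hpred : (fun k => v k ∈ A) = (fun k => snocNegOne (v k) ∈ W) :=
    funext fun k => propext (AffAux.mem_iff_snoc_mem A haA (v k))
  have hcast : ((Module.finrank ℝ W : ℝ)) = (Module.finrank ℝ A.direction : ℝ) + 1 := by
    rw [hrank]; push_cast; ring
  have hWeq : (1 / (Module.finrank ℝ W : ℝ)) * wsum w (fun k => snocNegOne (v k) ∈ W)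
      = (1 / ((n : ℝ) + 1)) * ∑ k, w k := by
    rw [hcast, ← hpred]; exact hAeq
  obtain ⟨W', hW'top, hinf, hsup, hW'eq⟩ := hyp_eq W hWbot hWtop hWeq
  by_cases hex : ∃ q ∈ W', q (Fin.last n) ≠ 0
  · obtain ⟨q, hqW', hql⟩ := hex
    exact AffAux.build v w _ W W' hinf hsup hW'top hqW' hql hW'eq
  · push_neg at hex
    have hws : wsum w (fun k => snocNegOne (v k) ∈ W') = 0 := by
      apply AffAux.wsum_false
      intro k hk
      have h0 := hex _ hk
      rw [AffAux.snoc_last] at h0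
      norm_num at h0
    have hsum0 : ∑ k, w k = 0 := by
      rw [hws, mul_zero] at hW'eq
      have h := hW'eq.symm
      rcases mul_eq_zero.mp h with h1 | h2
      · exfalso
        have : (0:ℝ) < 1 / ((n : ℝ) + 1) := by positivity
        linarith
      · exact h2
    have hW'bot : W' ≠ ⊥ := by
      intro h
      rw [h, sup_bot_eq] at hsup
      exact hWtop hsup
    obtain ⟨c₀, hc₀W', hc₀⟩ := Submodule.exists_mem_ne_zero_of_ne_bot hW'bot
    set p := snocNegOne a with hp
    set g : Euc (n + 1) →ₗ[ℝ] Euc (n + 1) :=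
      LinearMap.id +
        (LinearMap.toSpanSingleton ℝ (Euc (n + 1)) p).comp (innerSL ℝ c₀).toLinearMap with hg
    have hgx : ∀ x : Euc (n + 1), g x = x + ⟪c₀, x⟫ • p := fun x => rfl
    set W'' := W'.map g with hW''def
    have hinf'' : W ⊓ W'' = ⊥ := by
      rw [eq_bot_iff]
      intro x hx
      rw [Submodule.mem_inf] at hx
      obtain ⟨hxW, hxW''⟩ := hx
      obtain ⟨c, hcW', rfl⟩ := hxW''
      have hcW : c ∈ W := by
        have hc2 : c = g c - ⟪c₀, c⟫ • p := by rw [hgx]; abel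
        rw [hc2]
        exact W.sub_mem hxW (W.smul_mem _ hpW)
      have hc3 : c ∈ W ⊓ W' := Submodule.mem_inf.mpr ⟨hcW, hcW'⟩
      rw [hinf, Submodule.mem_bot] at hc3
      rw [hc3, map_zero]
      exact Submodule.zero_mem _
    have hsup'' : W ⊔ W'' = ⊤ := by
      rw [eq_top_iff]
      intro x _
      have hx : x ∈ W ⊔ W' := by rw [hsup]; trivial
      rw [Submodule.mem_sup] at hx
      obtain ⟨u, hu, c, hc, rfl⟩ := hx
      have hdecomp : u + c = (u - ⟪c₀, c⟫ • p) + g c := by rw [hgx]; abel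
      rw [hdecomp]
      exact Submodule.add_mem _
        (Submodule.mem_sup_left (W.sub_mem hu (W.smul_mem _ hpW)))
        (Submodule.mem_sup_right (Submodule.mem_map_of_mem hc))
    have hW''top : W'' ≠ ⊤ := by
      intro h
      rw [h, inf_top_eq] at hinf''
      exact hWbot hinf''
    have hgc₀ : g c₀ ∈ W'' := Submodule.mem_map_of_mem hc₀W'
    have hgl : (g c₀) (Fin.last n) ≠ 0 := by
      have h1 : (g c₀) (Fin.last n) = c₀ (Fin.last n) + ⟪c₀, c₀⟫ * p (Fin.last n) := by
        rw [hgx]; rfl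
      rw [h1, hex _ hc₀W', hp, AffAux.snoc_last]
      have h2 : ⟪c₀, c₀⟫ ≠ 0 := fun h => hc₀ (inner_self_eq_zero.mp h)
      intro hcon
      apply h2
      linarith
    have heq'' : (1 / (Module.finrank ℝ W'' : ℝ)) * wsum w (fun k => snocNegOne (v k) ∈ W'')
        = (1 / ((n : ℝ) + 1)) * ∑ k, w k := by
      have hle := AffAux.wsum_le (fun k => le_of_lt (hw k)) (fun k => snocNegOne (v k) ∈ W'')
      have hge := AffAux.wsum_nonneg (fun k => le_of_lt (hw k)) (fun k => snocNegOne (v k) ∈ W'')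
      have h0 : wsum w (fun k => snocNegOne (v k) ∈ W'') = 0 := by linarith [hsum0]
      rw [h0, hsum0, mul_zero, mul_zero]
    exact AffAux.build v w _ W W'' hinf'' hsup'' hW''top hgc₀ hgl heq''
end
end

section
/- Let N ≥ 1, let e_1, …, e_m ∈ ℝ^N be vectors, regarded also as vectors of ℂ^N via the standard inclusion ℝ^N ⊆ ℂ^N, and let w_1, …, w_m > 0 be positive real weights. Suppose that (i) for every nonzero proper ℂ-linear subspace F ⊊ ℂ^N one has (1/dim_ℂ F) · Σ_{k : e_k ∈ F} w_k ≤ (1/N) · Σ_{k=1}^m w_k, and (ii) whenever equality holds in (i) for some F, there exists a ℂ-linear subspace F′ ⊊ ℂ^N complementary to F (i.e. F ∩ F′ = 0 and F + F′ = ℂ^N) for which equality also holds. Then, whenever (1/dim_ℝ W) · Σ_{k : e_k ∈ W} w_k = (1/N) · Σ_{k=1}^m w_k for some nonzero proper ℝ-linear subspace W ⊊ ℝ^N, there exists an ℝ-linear subspace W′ ⊊ ℝ^N complementary to W (i.e. W ∩ W′ = 0 and W + W′ = ℝ^N) for which equality also holds. -/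
open MeasureTheory Module
open scoped RealInnerProductSpace

noncomputable section

namespace RCAux
variable {N : ℕ}

lemma cx_apply (x : EuclideanSpace ℝ (Fin N)) (i : Fin N) : complexify x i = (x i : ℂ) := rfl

def reP (x : EuclideanSpace ℂ (Fin N)) : EuclideanSpace ℝ (Fin N) := WithLp.toLp 2 fun i => (x i).re
def imP (x : EuclideanSpace ℂ (Fin N)) : EuclideanSpace ℝ (Fin N) := WithLp.toLp 2 fun i => (x i).im
def conjv (x : EuclideanSpace ℂ (Fin N)) : EuclideanSpace ℂ (Fin N) :=
  WithLp.toLp 2 fun i => (starRingEnd ℂ) (x i)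

lemma reP_cx (v : EuclideanSpace ℝ (Fin N)) : reP (complexify v) = v := by
  ext i; simp [reP, cx_apply]

lemma imP_cx (v : EuclideanSpace ℝ (Fin N)) : imP (complexify v) = 0 := by
  ext i; simp [imP, cx_apply]

lemma conjv_cx (v : EuclideanSpace ℝ (Fin N)) : conjv (complexify v) = complexify v := by
  ext i; simp [conjv, cx_apply]

lemma decomp (x : EuclideanSpace ℂ (Fin N)) :
    x = complexify (reP x) + Complex.I • complexify (imP x) := by
  ext i
  show x i = ((x i).re : ℂ) + Complex.I * ((x i).im : ℂ)
  simp [Complex.ext_iff]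

lemma cx_eq_zero {v : EuclideanSpace ℝ (Fin N)} (h : complexify v = 0) : v = 0 := by
  ext i
  have := congrArg (fun y => y i) h
  simpa [cx_apply, Complex.ext_iff] using this

/-- complexify as an ℝ-linear map. -/
def cxL : EuclideanSpace ℝ (Fin N) →ₗ[ℝ] EuclideanSpace ℂ (Fin N) where
  toFun := complexify
  map_add' x y := by ext i; simp [cx_apply]
  map_smul' r x := by
    ext i
    show (((r • x) i : ℝ) : ℂ) = r • ((x i : ℝ) : ℂ)
    show ((r * x i : ℝ) : ℂ) = r • ((x i : ℝ) : ℂ)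
    simp [Complex.real_smul]

lemma cxL_apply (v : EuclideanSpace ℝ (Fin N)) : cxL v = complexify v := rfl

/-- The set of complex vectors with real and imaginary parts in `U`, as a ℂ-submodule. -/
def K (U : Submodule ℝ (EuclideanSpace ℝ (Fin N))) :
    Submodule ℂ (EuclideanSpace ℂ (Fin N)) where
  carrier := {x | reP x ∈ U ∧ imP x ∈ U}
  add_mem' := by
    rintro x y ⟨hx1, hx2⟩ ⟨hy1, hy2⟩
    have h1 : reP (x + y) = reP x + reP y := by ext i; simp [reP]
    have h2 : imP (x + y) = imP x + imP y := by ext i; simp [imP]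
    exact ⟨h1 ▸ U.add_mem hx1 hy1, h2 ▸ U.add_mem hx2 hy2⟩
  zero_mem' := by
    constructor <;> · show _ ∈ U; convert U.zero_mem using 1; ext i; simp [reP, imP]
  smul_mem' := by
    rintro c x ⟨hx1, hx2⟩
    have h1 : reP (c • x) = c.re • reP x - c.im • imP x := by
      ext i
      show (c * x i).re = c.re * (x i).re - c.im * (x i).im
      simp [Complex.mul_re]
    have h2 : imP (c • x) = c.re • imP x + c.im • reP x := by
      ext i
      show (c * x i).im = c.re * (x i).im + c.im * (x i).re
      simp [Complex.mul_im]
    exact ⟨h1 ▸ U.sub_mem (U.smul_mem _ hx1) (U.smul_mem _ hx2),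
           h2 ▸ U.add_mem (U.smul_mem _ hx2) (U.smul_mem _ hx1)⟩

lemma mem_K {U : Submodule ℝ (EuclideanSpace ℝ (Fin N))} {x : EuclideanSpace ℂ (Fin N)} :
    x ∈ K U ↔ reP x ∈ U ∧ imP x ∈ U := Iff.rfl

/-- The complexification of a real subspace. -/
def FC (U : Submodule ℝ (EuclideanSpace ℝ (Fin N))) :
    Submodule ℂ (EuclideanSpace ℂ (Fin N)) :=
  Submodule.span ℂ (complexify '' (U : Set (EuclideanSpace ℝ (Fin N))))

lemma FC_eq_K (U : Submodule ℝ (EuclideanSpace ℝ (Fin N))) : FC U = K U := by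
  apply le_antisymm
  · rw [FC, Submodule.span_le]
    rintro _ ⟨v, hv, rfl⟩
    exact ⟨by rw [reP_cx]; exact hv, by rw [imP_cx]; exact U.zero_mem⟩
  · rintro x ⟨h1, h2⟩
    rw [decomp x]
    exact Submodule.add_mem _
      (Submodule.subset_span ⟨_, h1, rfl⟩)
      (Submodule.smul_mem _ _ (Submodule.subset_span ⟨_, h2, rfl⟩))

lemma cx_mem_FC {U : Submodule ℝ (EuclideanSpace ℝ (Fin N))} {v : EuclideanSpace ℝ (Fin N)} :
    complexify v ∈ FC U ↔ v ∈ U := by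
  rw [FC_eq_K, mem_K, reP_cx, imP_cx]
  simp [U.zero_mem]

/-- The map `(u, v) ↦ complexify u + I • complexify v`, ℝ-linearly. -/
def phi (U : Submodule ℝ (EuclideanSpace ℝ (Fin N))) :
    (U × U) →ₗ[ℝ] EuclideanSpace ℂ (Fin N) :=
  cxL.comp (U.subtype.comp (LinearMap.fst ℝ U U)) +
    (Complex.I • cxL).comp (U.subtype.comp (LinearMap.snd ℝ U U))

lemma phi_apply (U : Submodule ℝ (EuclideanSpace ℝ (Fin N))) (p : U × U) :
    phi U p = complexify p.1 + Complex.I • complexify p.2 := rfl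

lemma phi_inj (U : Submodule ℝ (EuclideanSpace ℝ (Fin N))) :
    Function.Injective (phi U) := by
  rw [← LinearMap.ker_eq_bot]
  rw [Submodule.eq_bot_iff]
  rintro ⟨u, v⟩ h
  rw [LinearMap.mem_ker, phi_apply] at h
  have h1 : reP (complexify (u : EuclideanSpace ℝ (Fin N)) + Complex.I • complexify (v : EuclideanSpace ℝ (Fin N))) = u := by
    ext i
    show (((u : EuclideanSpace ℝ (Fin N)) i : ℂ) + Complex.I * ((v : EuclideanSpace ℝ (Fin N)) i : ℂ)).re = _
    simp
  have h2 : imP (complexify (u : EuclideanSpace ℝ (Fin N)) + Complex.I • complexify (v : EuclideanSpace ℝ (Fin N))) = v := by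
    ext i
    show (((u : EuclideanSpace ℝ (Fin N)) i : ℂ) + Complex.I * ((v : EuclideanSpace ℝ (Fin N)) i : ℂ)).im = _
    simp
  rw [h] at h1 h2
  have hu : (u : EuclideanSpace ℝ (Fin N)) = 0 := by rw [← h1]; ext i; simp [reP]
  have hv : (v : EuclideanSpace ℝ (Fin N)) = 0 := by rw [← h2]; ext i; simp [imP]
  ext <;> simp [hu, hv]

lemma phi_range (U : Submodule ℝ (EuclideanSpace ℝ (Fin N))) :
    LinearMap.range (phi U) = (FC U).restrictScalars ℝ := by
  apply le_antisymm
  · rintro _ ⟨⟨u, v⟩, rfl⟩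
    rw [phi_apply]
    simp only [Submodule.restrictScalars_mem]
    exact Submodule.add_mem _ (Submodule.subset_span ⟨_, u.2, rfl⟩)
      (Submodule.smul_mem _ _ (Submodule.subset_span ⟨_, v.2, rfl⟩))
  · intro x hx
    rw [Submodule.restrictScalars_mem, FC_eq_K, mem_K] at hx
    exact ⟨(⟨reP x, hx.1⟩, ⟨imP x, hx.2⟩), (phi_apply _ _).trans (decomp x).symm⟩

lemma finrank_FC (U : Submodule ℝ (EuclideanSpace ℝ (Fin N))) :
    finrank ℂ (FC U) = finrank ℝ U := by
  have e1 : (U × U) ≃ₗ[ℝ] ((FC U).restrictScalars ℝ) :=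
    (LinearEquiv.ofInjective (phi U) (phi_inj U)).trans
      (LinearEquiv.ofEq _ _ (phi_range U))
  have h1 : finrank ℝ ((FC U).restrictScalars ℝ) = 2 * finrank ℝ U := by
    rw [← e1.finrank_eq]
    simp [finrank_prod, two_mul]
  have h2 : finrank ℝ ((FC U).restrictScalars ℝ) = 2 * finrank ℂ (FC U) := by
    exact finrank_real_of_complex _
  omega


def conjS (F : Submodule ℂ (EuclideanSpace ℂ (Fin N))) :
    Submodule ℂ (EuclideanSpace ℂ (Fin N)) where
  carrier := {x | conjv x ∈ F}
  add_mem' := by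
    intro x y hx hy
    have h : conjv (x + y) = conjv x + conjv y := by ext i; simp [conjv]
    show conjv (x + y) ∈ F
    rw [h]; exact F.add_mem hx hy
  zero_mem' := by
    show conjv 0 ∈ F
    have h : conjv (0 : EuclideanSpace ℂ (Fin N)) = 0 := by ext i; simp [conjv]
    rw [h]; exact F.zero_mem
  smul_mem' := by
    intro c x hx
    show conjv (c • x) ∈ F
    have h : conjv (c • x) = (starRingEnd ℂ c) • conjv x := by
      ext i
      show (starRingEnd ℂ) (c * x i) = (starRingEnd ℂ c) * (starRingEnd ℂ) (x i)
      simp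
    rw [h]; exact F.smul_mem _ hx

lemma mem_conjS {F : Submodule ℂ (EuclideanSpace ℂ (Fin N))} {x : EuclideanSpace ℂ (Fin N)} :
    x ∈ conjS F ↔ conjv x ∈ F := Iff.rfl

lemma cx_reP (x : EuclideanSpace ℂ (Fin N)) :
    complexify (reP x) = ((1 : ℂ)/2) • (x + conjv x) := by
  ext i
  show ((x i).re : ℂ) = (1/2) * (x i + (starRingEnd ℂ) (x i))
  rw [Complex.add_conj]; push_cast; ring

lemma cx_imP (x : EuclideanSpace ℂ (Fin N)) :
    complexify (imP x) = (-Complex.I/2) • (x - conjv x) := by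
  ext i
  show ((x i).im : ℂ) = (-Complex.I/2) * (x i - (starRingEnd ℂ) (x i))
  rw [Complex.sub_conj]
  push_cast
  ring_nf
  rw [Complex.I_sq]
  ring

end RCAux


section WsumHelpers
open Classical

lemma wsum_congr {m : ℕ} (w : Fin m → ℝ) {p q : Fin m → Prop} (h : ∀ k, p k ↔ q k) :
    wsum w p = wsum w q := by
  unfold wsum
  congr 1
  ext k
  simp [h k]

lemma wsum_true {m : ℕ} (w : Fin m → ℝ) {p : Fin m → Prop} (h : ∀ k, p k) :
    wsum w p = ∑ k, w k := by
  unfold wsum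
  congr 1
  ext k
  simp [h k]

lemma wsum_insert_le {m : ℕ} (w : Fin m → ℝ) (hw : ∀ k, 0 < w k) {p q : Fin m → Prop}
    {k₀ : Fin m} (hk₀ : ¬ p k₀) (hq₀ : q k₀) (h : ∀ k, p k → q k) :
    wsum w p + w k₀ ≤ wsum w q := by
  have hnotmem : k₀ ∉ Finset.univ.filter p := by simp [hk₀]
  have hins : wsum w p + w k₀ = ∑ k ∈ insert k₀ (Finset.univ.filter p), w k := by
    rw [Finset.sum_insert hnotmem]; unfold wsum; ring
  rw [hins]
  unfold wsum
  apply Finset.sum_le_sum_of_subset_of_nonneg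
  · intro k hk
    simp only [Finset.mem_insert, Finset.mem_filter, Finset.mem_univ, true_and] at hk ⊢
    rcases hk with rfl | hk
    · exact hq₀
    · exact h k hk
  · exact fun k _ _ => (hw k).le

end WsumHelpers

/-- If positive weights `w_k` attached to real vectors `e_k ∈ ℝ^N ⊆ ℂ^N` satisfy the
subspace concentration inequality for all nonzero proper `ℂ`-linear subspaces of `ℂ^N`,
with the property that any equality case admits a complementary equality case, then any
nonzero proper `ℝ`-linear subspace `W ⊊ ℝ^N` attaining equality admits a complementary
`ℝ`-linear subspace `W' ⊊ ℝ^N` (i.e. `W ⊓ W' = ⊥` and `W ⊔ W' = ⊤`) attaining equality. -/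
theorem real_equality_of_complex_equality
    {N m : ℕ} (hN : 1 ≤ N) (e : Fin m → EuclideanSpace ℝ (Fin N))
    (w : Fin m → ℝ) (hw : ∀ k, 0 < w k)
    (hyp : ∀ F : Submodule ℂ (EuclideanSpace ℂ (Fin N)), F ≠ ⊥ → F ≠ ⊤ →
      (1 / (Module.finrank ℂ F : ℝ)) * wsum w (fun k => complexify (e k) ∈ F) ≤
        (1 / (N : ℝ)) * ∑ k, w k)
    (hyp_eq : ∀ F : Submodule ℂ (EuclideanSpace ℂ (Fin N)), F ≠ ⊥ → F ≠ ⊤ →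
      (1 / (Module.finrank ℂ F : ℝ)) * wsum w (fun k => complexify (e k) ∈ F) =
        (1 / (N : ℝ)) * ∑ k, w k →
      ∃ F' : Submodule ℂ (EuclideanSpace ℂ (Fin N)), F' ≠ ⊤ ∧ F ⊓ F' = ⊥ ∧ F ⊔ F' = ⊤ ∧
        (1 / (Module.finrank ℂ F' : ℝ)) * wsum w (fun k => complexify (e k) ∈ F') =
          (1 / (N : ℝ)) * ∑ k, w k) :
    ∀ W : Submodule ℝ (EuclideanSpace ℝ (Fin N)), W ≠ ⊥ → W ≠ ⊤ →
      (1 / (Module.finrank ℝ W : ℝ)) * wsum w (fun k => e k ∈ W) =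
        (1 / (N : ℝ)) * ∑ k, w k →
      ∃ W' : Submodule ℝ (EuclideanSpace ℝ (Fin N)), W' ≠ ⊤ ∧ W ⊓ W' = ⊥ ∧ W ⊔ W' = ⊤ ∧
        (1 / (Module.finrank ℝ W' : ℝ)) * wsum w (fun k => e k ∈ W') =
          (1 / (N : ℝ)) * ∑ k, w k := by
    classical
  intro W hWbot hWtop hWeq
  by_cases hm : m = 0
  · subst hm
    obtain ⟨W', hc⟩ := Submodule.exists_isCompl W
    refine ⟨W', ?_, disjoint_iff.mp hc.disjoint, codisjoint_iff.mp hc.codisjoint, ?_⟩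
    · intro h
      apply hWbot
      have h2 := disjoint_iff.mp hc.disjoint
      rwa [h, inf_top_eq] at h2
    · simp [wsum]
  · have hmpos : 0 < m := Nat.pos_of_ne_zero hm
    have hNr : (0:ℝ) < N := by exact_mod_cast Nat.lt_of_lt_of_le Nat.zero_lt_one hN
    have hTpos : 0 < ∑ k, w k :=
      Finset.sum_pos (fun k _ => hw k) ⟨⟨0, hmpos⟩, Finset.mem_univ _⟩
    set A : ℝ := (1/(N:ℝ)) * ∑ k, w k with hA
    have hApos : 0 < A := mul_pos (by positivity) hTpos
    have hfrW : finrank ℝ W ≠ 0 := fun h => hWbot (Submodule.finrank_eq_zero.mp h)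
    have hfrW_lt : finrank ℝ W < N := by
      have h := Submodule.finrank_lt (K := ℝ) hWtop
      rwa [finrank_euclideanSpace_fin] at h
    have hN2 : 2 ≤ N := by omega
    set F : Submodule ℂ (EuclideanSpace ℂ (Fin N)) := RCAux.FC W with hFdef
    have hdimF : finrank ℂ F = finrank ℝ W := RCAux.finrank_FC W
    have hfrC : finrank ℂ (EuclideanSpace ℂ (Fin N)) = N := finrank_euclideanSpace_fin
    have hFbot : F ≠ ⊥ := by
      intro h; rw [h, finrank_bot] at hdimF; omega
    have hFtop : F ≠ ⊤ := by
      intro h; rw [h, finrank_top, hfrC] at hdimF; omega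
    have hFeq : (1 / (finrank ℂ F : ℝ)) * wsum w (fun k => complexify (e k) ∈ F) = A := by
      rw [hdimF, wsum_congr w (fun k => RCAux.cx_mem_FC (U := W) (v := e k))]
      exact hWeq
    obtain ⟨F', hF'top, hinf, hsup, hF'eq⟩ := hyp_eq F hFbot hFtop hFeq
    have hF'bot : F' ≠ ⊥ := by
      intro h
      rw [h, finrank_bot] at hF'eq
      norm_num at hF'eq
      linarith
    set d' := finrank ℂ F' with hd'def
    have hd'pos : 0 < d' := Nat.pos_of_ne_zero (fun h => hF'bot (Submodule.finrank_eq_zero.mp h))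
    have hd'r : (0:ℝ) < d' := by exact_mod_cast hd'pos
    have hws' : wsum w (fun k => complexify (e k) ∈ F') = d' * A := by
      rw [← hF'eq]; field_simp
    have hpredF'' : ∀ k, (complexify (e k) ∈ F' ⊓ RCAux.conjS F') ↔ (complexify (e k) ∈ F') := by
      intro k
      rw [Submodule.mem_inf]
      exact ⟨fun h => h.1, fun h => ⟨h, by rw [RCAux.mem_conjS, RCAux.conjv_cx]; exact h⟩⟩
    have hcx0map : complexify (0 : EuclideanSpace ℝ (Fin N)) = 0 := by
      rw [← RCAux.cxL_apply, map_zero]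
    have hF''bot : F' ⊓ RCAux.conjS F' ≠ ⊥ := by
      intro hbot
      have hz : ∀ k, (complexify (e k) ∈ F') ↔ e k = 0 := by
        intro k
        rw [← hpredF'' k, hbot, Submodule.mem_bot]
        exact ⟨fun h => RCAux.cx_eq_zero h, fun h => by rw [h]; exact hcx0map⟩
      by_cases hall : ∀ k, e k = 0
      · have hT' : wsum w (fun k => complexify (e k) ∈ F') = ∑ k, w k :=
          wsum_true w (fun k => (hz k).mpr (hall k))
        rw [hws'] at hT'
        have hTN : (∑ k, w k) = N * A := by rw [hA]; field_simp
        rw [hTN] at hT'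
        have hd'N : (d' : ℝ) = N := mul_right_cancel₀ hApos.ne' hT'
        have hd'N' : d' = N := by exact_mod_cast hd'N
        exact hF'top (Submodule.eq_top_of_finrank_eq (by rw [← hd'def, hd'N', hfrC]))
      · push_neg at hall
        obtain ⟨k₀, hk₀⟩ := hall
        have hcx0 : complexify (e k₀) ≠ 0 := fun h => hk₀ (RCAux.cx_eq_zero h)
        set L : Submodule ℂ (EuclideanSpace ℂ (Fin N)) :=
          Submodule.span ℂ {complexify (e k₀)} with hL
        have hLfr : finrank ℂ L = 1 := finrank_span_singleton hcx0
        have hLbot : L ≠ ⊥ := by intro h; rw [h, finrank_bot] at hLfr; omega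
        have hLtop : L ≠ ⊤ := by intro h; rw [h, finrank_top, hfrC] at hLfr; omega
        have h1 := hyp L hLbot hLtop
        rw [hLfr] at h1
        norm_num at h1
        have h2 : wsum w (fun k => complexify (e k) ∈ F') + w k₀ ≤
            wsum w (fun k => complexify (e k) ∈ L) := by
          apply wsum_insert_le w hw
          · rw [hz k₀]; exact hk₀
          · exact Submodule.mem_span_singleton_self _
          · intro k hk
            rw [hz k] at hk
            rw [hk, hcx0map]
            exact L.zero_mem
        rw [hws'] at h2
        have h4 : (1:ℝ) * A ≤ (d':ℝ) * A :=
          mul_le_mul_of_nonneg_right (by exact_mod_cast hd'pos) hApos.le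
        linarith [hw k₀]
    have hF''top : F' ⊓ RCAux.conjS F' ≠ ⊤ := by
      intro h
      exact hF'top (top_unique (h ▸ inf_le_left))
    have h3 := hyp _ hF''bot hF''top
    rw [wsum_congr w hpredF'', hws'] at h3
    set d'' := finrank ℂ ↥(F' ⊓ RCAux.conjS F') with hd''def
    have hd''pos : 0 < d'' :=
      Nat.pos_of_ne_zero (fun h => hF''bot (Submodule.finrank_eq_zero.mp h))
    have hd''r : (0:ℝ) < d'' := by exact_mod_cast hd''pos
    have hled : d' ≤ d'' := by
      by_contra hlt
      push_neg at hlt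
      have hltr : (d'':ℝ) < d' := by exact_mod_cast hlt
      have := mul_le_mul_of_nonneg_left h3 hd''r.le
      rw [← mul_assoc, mul_one_div, div_self hd''r.ne', one_mul] at this
      nlinarith
    have hd''le : d'' ≤ d' := Submodule.finrank_mono inf_le_left
    have hF''eq : F' ⊓ RCAux.conjS F' = F' :=
      Submodule.eq_of_le_of_finrank_le inf_le_left (by omega)
    have hstab : ∀ x ∈ F', RCAux.conjv x ∈ F' := by
      intro x hx
      have hx2 : x ∈ F' ⊓ RCAux.conjS F' := by rw [hF''eq]; exact hx
      exact hx2.2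
    set W' : Submodule ℝ (EuclideanSpace ℝ (Fin N)) :=
      Submodule.comap RCAux.cxL (F'.restrictScalars ℝ) with hW'def
    have hmemW' : ∀ v : EuclideanSpace ℝ (Fin N), v ∈ W' ↔ complexify v ∈ F' := by
      intro v
      rw [hW'def]
      simp [Submodule.mem_comap, RCAux.cxL_apply]
    have hFCW' : RCAux.FC W' = F' := by
      apply le_antisymm
      · rw [RCAux.FC, Submodule.span_le]
        rintro _ ⟨v, hv, rfl⟩
        exact (hmemW' v).mp hv
      · intro x hx
        rw [RCAux.FC_eq_K, RCAux.mem_K]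
        constructor
        · rw [hmemW', RCAux.cx_reP]
          exact Submodule.smul_mem _ _ (F'.add_mem hx (hstab x hx))
        · rw [hmemW', RCAux.cx_imP]
          exact Submodule.smul_mem _ _ (F'.sub_mem hx (hstab x hx))
    have hdimW' : finrank ℝ W' = d' := by
      have h := RCAux.finrank_FC W'
      rw [hFCW'] at h
      omega
    have hinfW : W ⊓ W' = ⊥ := by
      rw [eq_bot_iff]
      intro x hx
      rw [Submodule.mem_inf] at hx
      have hx2 : complexify x ∈ F ⊓ F' :=
        ⟨RCAux.cx_mem_FC.mpr hx.1, (hmemW' x).mp hx.2⟩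
      rw [hinf, Submodule.mem_bot] at hx2
      rw [Submodule.mem_bot]
      exact RCAux.cx_eq_zero hx2
    have hsupW : W ⊔ W' = ⊤ := by
      apply Submodule.eq_top_of_finrank_eq
      have h1 := Submodule.finrank_sup_add_finrank_inf_eq W W'
      have h2 := Submodule.finrank_sup_add_finrank_inf_eq F F'
      rw [hsup, hinf, finrank_top, finrank_bot, hfrC] at h2
      rw [hinfW, finrank_bot, hdimW'] at h1
      rw [finrank_euclideanSpace_fin]
      omega
    refine ⟨W', ?_, hinfW, hsupW, ?_⟩
    · intro h
      apply hF'top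
      apply Submodule.eq_top_of_finrank_eq
      rw [h, finrank_top, finrank_euclideanSpace_fin] at hdimW'
      rw [hfrC, ← hd'def]
      omega
    · rw [hdimW', wsum_congr w (fun k => hmemW' (e k))]
      exact hF'eq
end
end

section
/- Let P ⊆ ℝ² be a reflexive lattice triangle, i.e. a full-dimensional reflexive lattice polytope with exactly three facets (sides) P_1, P_2, P_3, with primitive inner normals v_1, v_2, v_3 ∈ ℤ² and side lattice lengths ℓ_1, ℓ_2, ℓ_3. Then P satisfies the affine subspace concentration conditions — that is, for every proper affine subspace A ⊊ ℝ² one has (1/(dim A + 1)) · Σ_{k : v_k ∈ A} ℓ_k ≤ (1/3) · (ℓ_1 + ℓ_2 + ℓ_3) — if and only if ℓ_1 = ℓ_2 = ℓ_3. -/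
open MeasureTheory Module
open scoped RealInnerProductSpace

noncomputable section

-- auxiliary lemmas to insert
lemma ell_nonneg {n m : ℕ} (Q : LatticePolytope n m) (k : Fin m) (ℓ : ℝ)
    (h : Q.IsLatticeLength k ℓ) : 0 ≤ ℓ := by
  obtain ⟨d, -, -, hEq⟩ := h
  rw [hEq]
  positivity

lemma not_all_normals_in (Q : LatticePolytope 2 3) (A : AffineSubspace ℝ (Euc 2))
    (hA : Module.finrank ℝ A.direction ≤ 1) (h : ∀ k, Q.v k ∈ A) : False := by
  have h10 : Q.v 1 ≠ Q.v 0 := fun hh => absurd (Q.v_injective hh) (by decide)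
  have hd0 : Q.v 1 - Q.v 0 ≠ 0 := sub_ne_zero.mpr h10
  set d : Euc 2 := Q.v 1 - Q.v 0 with hd
  have hdA : d ∈ A.direction := AffineSubspace.vsub_mem_direction (h 1) (h 0)
  have hspan : A.direction = Submodule.span ℝ {d} := by
    refine (Submodule.eq_of_le_of_finrank_le ?_ ?_).symm
    · rwa [Submodule.span_singleton_le_iff_mem]
    · rwa [finrank_span_singleton hd0]
  set u : Euc 2 := (WithLp.equiv 2 (Fin 2 → ℝ)).symm ![-(d 1), d 0] with hu
  have hu0 : u 0 = -(d 1) := rfl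
  have hu1 : u 1 = d 0 := rfl
  have hud : ⟪u, d⟫ = 0 := by
    simp only [PiLp.inner_apply, RCLike.inner_apply, conj_trivial, Fin.sum_univ_two, hu0, hu1]
    ring
  have hune : u ≠ 0 := by
    intro h0
    apply hd0
    have e0 : d 0 = 0 := by rw [← hu1, h0]; rfl
    have e1 : d 1 = 0 := by
      have : -(d 1) = 0 := by rw [← hu0, h0]; rfl
      linarith
    ext i
    fin_cases i <;> simpa
  have key2 : ∀ k, ⟪u, Q.v k⟫ = ⟪u, Q.v 0⟫ := by
    intro k
    obtain ⟨t, ht⟩ := Submodule.mem_span_singleton.mp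
      (hspan ▸ AffineSubspace.vsub_mem_direction (h k) (h 0))
    have hvk : Q.v k = Q.v 0 + t • d := by
      have : t • d = Q.v k - Q.v 0 := ht
      rw [this]; abel
    rw [hvk, inner_add_right, real_inner_smul_right, hud]
    ring
  obtain ⟨w, hw0, hwne⟩ : ∃ w : Euc 2, (∀ k, 0 ≤ ⟪w, Q.v k⟫) ∧ w ≠ 0 := by
    rcases le_total 0 ⟪u, Q.v 0⟫ with hc | hc
    · exact ⟨u, fun k => by rw [key2 k]; exact hc, hune⟩
    · refine ⟨-u, fun k => ?_, neg_ne_zero.mpr hune⟩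
      rw [inner_neg_left, key2 k]; linarith
  obtain ⟨S, hS, hPS⟩ := Q.isPolytope
  have hbd : Bornology.IsBounded Q.P := by
    rw [hPS]
    exact (S.finite_toSet.isCompact_convexHull (𝕜 := ℝ)).isBounded
  obtain ⟨C, hC⟩ := isBounded_iff_forall_norm_le.mp hbd
  obtain ⟨x₀, hx₀⟩ := Q.fullDim
  have hx₀P : x₀ ∈ Q.P := interior_subset hx₀
  have hwpos : 0 < ‖w‖ := norm_pos_iff.mpr hwne
  have hCx : ‖x₀‖ ≤ C := hC x₀ hx₀P
  set t : ℝ := (C + ‖x₀‖ + 1) / ‖w‖ with htdef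
  have ht0 : 0 ≤ t := by
    apply div_nonneg _ hwpos.le
    have := norm_nonneg x₀
    linarith
  have hmem : x₀ + t • w ∈ Q.P := by
    have hx := hx₀P
    rw [Q.halfspaces] at hx ⊢
    intro k
    have h1 := hx k
    have h2 := mul_nonneg ht0 (hw0 k)
    rw [inner_add_left, real_inner_smul_left]
    linarith
  have hC2 : ‖x₀ + t • w‖ ≤ C := hC _ hmem
  have h3 : ‖t • w‖ = C + ‖x₀‖ + 1 := by
    rw [norm_smul, Real.norm_of_nonneg ht0, htdef, div_mul_cancel₀]
    exact hwpos.ne'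
  have h4 : ‖t • w‖ ≤ ‖x₀ + t • w‖ + ‖x₀‖ := by
    have := norm_sub_le (x₀ + t • w) x₀
    simpa using this
  linarith

/-- A reflexive lattice triangle `P ⊆ ℝ²` with sides `P_1, P_2, P_3`, primitive inner
normals `v_k` and side lattice lengths `ℓ_k` satisfies the affine subspace concentration
conditions (for every proper affine subspace `A ⊊ ℝ²`,
`(1/(dim A + 1)) ∑_{k : v_k ∈ A} ℓ_k ≤ (1/3)(ℓ_1 + ℓ_2 + ℓ_3)`) if and only if all three
sides have the same lattice length. -/
theorem reflexive_triangle_concentration_iff_equal_lengths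
    (Q : LatticePolytope 2 3) (hrefl : Q.Reflexive)
    (ℓ : Fin 3 → ℝ) (hℓ : ∀ k, Q.IsLatticeLength k (ℓ k)) :
    (∀ A : AffineSubspace ℝ (Euc 2),
        (A : Set (Euc 2)).Nonempty → (A : Set (Euc 2)) ≠ Set.univ →
        (1 / ((Module.finrank ℝ A.direction : ℝ) + 1)) * wsum ℓ (fun k => Q.v k ∈ A) ≤
          (1 / 3) * (ℓ 0 + ℓ 1 + ℓ 2)) ↔
      (ℓ 0 = ℓ 1 ∧ ℓ 1 = ℓ 2) := by
  classical
  have hL0 : 0 ≤ ℓ 0 := ell_nonneg Q 0 (ℓ 0) (hℓ 0)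
  constructor
  · intro hcond
    have pair : ∀ i j m : Fin 3, i ≠ j →
        (∀ k : Fin 3, k = i ∨ k = j ∨ k = m) →
        (ℓ 0 + ℓ 1 + ℓ 2 = ℓ i + ℓ j + ℓ m) →
        ℓ i + ℓ j ≤ 2 * ℓ m := by
      intro i j m hij hcover hsum
      set A := affineSpan ℝ ({Q.v i, Q.v j} : Set (Euc 2)) with hA
      have hvij : Q.v i ≠ Q.v j := fun hh => hij (Q.v_injective hh)
      have hdir : A.direction = Submodule.span ℝ {Q.v i - Q.v j} := by
        rw [hA, direction_affineSpan, vectorSpan_pair]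
        rfl
      have hrk : Module.finrank ℝ A.direction = 1 := by
        rw [hdir]
        exact finrank_span_singleton (sub_ne_zero.mpr hvij)
      have hiA : Q.v i ∈ A := subset_affineSpan ℝ _ (by left; rfl)
      have hjA : Q.v j ∈ A := subset_affineSpan ℝ _ (by right; rfl)
      have hmA : Q.v m ∉ A := by
        intro hm
        refine not_all_normals_in Q A hrk.le (fun k => ?_)
        rcases hcover k with rfl | rfl | rfl
        exacts [hiA, hjA, hm]
      have hAuniv : (A : Set (Euc 2)) ≠ Set.univ := by
        intro hu
        exact hmA (by rw [← AffineSubspace.mem_coe, hu]; trivial)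
      have hAne : (A : Set (Euc 2)).Nonempty := ⟨Q.v i, hiA⟩
      have hcon := hcond A hAne hAuniv
      have hfil : (Finset.univ.filter (fun k => Q.v k ∈ A)) = {i, j} := by
        ext k
        simp only [Finset.mem_filter, Finset.mem_univ, true_and, Finset.mem_insert,
          Finset.mem_singleton]
        constructor
        · intro hk
          rcases hcover k with rfl | rfl | rfl
          · exact Or.inl rfl
          · exact Or.inr rfl
          · exact absurd hk hmA
        · rintro (rfl | rfl)
          exacts [hiA, hjA]
      have hws : wsum ℓ (fun k => Q.v k ∈ A) = ℓ i + ℓ j := by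
        unfold wsum
        rw [hfil, Finset.sum_pair hij]
      rw [hws, hrk] at hcon
      norm_num at hcon
      linarith
    have I2 := pair 0 1 2 (by decide) (by decide) (by ring)
    have I0 := pair 1 2 0 (by decide) (by decide) (by ring)
    have I1 := pair 0 2 1 (by decide) (by decide) (by ring)
    constructor <;> linarith
  · rintro ⟨h01, h12⟩ A hAne hAuniv
    have hr : Module.finrank ℝ A.direction ≤ 1 := by
      by_contra hcon
      push_neg at hcon
      have h2 : Module.finrank ℝ (Euc 2) = 2 := by
        simp [finrank_euclideanSpace]
      have hle := Submodule.finrank_le A.direction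
      have hdir : A.direction = ⊤ := Submodule.eq_top_of_finrank_eq (by omega)
      have : A = ⊤ := AffineSubspace.direction_eq_top_iff_of_nonempty hAne |>.mp hdir
      rw [this] at hAuniv
      exact hAuniv (AffineSubspace.top_coe ℝ _ _)
    have hnot3 : ¬ (Q.v 0 ∈ A ∧ Q.v 1 ∈ A ∧ Q.v 2 ∈ A) := by
      rintro ⟨p0, p1, p2⟩
      exact not_all_normals_in Q A hr (fun k => by fin_cases k <;> assumption)
    have hrpos : ∀ i j : Fin 3, i ≠ j → Q.v i ∈ A → Q.v j ∈ A →
        Module.finrank ℝ A.direction = 1 := by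
      intro i j hij pi pj
      have hne : Q.v i - Q.v j ≠ 0 := sub_ne_zero.mpr (fun hh => hij (Q.v_injective hh))
      have hmem : Q.v i - Q.v j ∈ A.direction := AffineSubspace.vsub_mem_direction pi pj
      have h1 : 1 ≤ Module.finrank ℝ A.direction := by
        calc 1 = Module.finrank ℝ (Submodule.span ℝ {Q.v i - Q.v j}) :=
              (finrank_span_singleton hne).symm
          _ ≤ Module.finrank ℝ A.direction :=
              Submodule.finrank_mono ((Submodule.span_singleton_le_iff_mem _ _).mpr hmem)
      omega
    have hcast : (0:ℝ) ≤ (Module.finrank ℝ A.direction : ℝ) := Nat.cast_nonneg _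
    have hone : 1 / ((Module.finrank ℝ A.direction : ℝ) + 1) ≤ 1 := by
      rw [div_le_one (by linarith)]
      linarith
    by_cases p0 : Q.v 0 ∈ A <;> by_cases p1 : Q.v 1 ∈ A <;> by_cases p2 : Q.v 2 ∈ A
    · exact absurd ⟨p0, p1, p2⟩ hnot3
    · have hws : wsum ℓ (fun k => Q.v k ∈ A) = ℓ 0 + ℓ 1 := by
        unfold wsum
        rw [Finset.sum_filter, Fin.sum_univ_three, if_pos p0, if_pos p1, if_neg p2]
        ring
      rw [hws, hrpos 0 1 (by decide) p0 p1]
      norm_num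
      linarith
    · have hws : wsum ℓ (fun k => Q.v k ∈ A) = ℓ 0 + ℓ 2 := by
        unfold wsum
        rw [Finset.sum_filter, Fin.sum_univ_three, if_pos p0, if_neg p1, if_pos p2]
        ring
      rw [hws, hrpos 0 2 (by decide) p0 p2]
      norm_num
      linarith
    · have hws : wsum ℓ (fun k => Q.v k ∈ A) = ℓ 0 := by
        unfold wsum
        rw [Finset.sum_filter, Fin.sum_univ_three, if_pos p0, if_neg p1, if_neg p2]
        ring
      rw [hws]
      have := mul_le_mul_of_nonneg_right hone hL0
      linarith
    · have hws : wsum ℓ (fun k => Q.v k ∈ A) = ℓ 1 + ℓ 2 := by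
        unfold wsum
        rw [Finset.sum_filter, Fin.sum_univ_three, if_neg p0, if_pos p1, if_pos p2]
        ring
      rw [hws, hrpos 1 2 (by decide) p1 p2]
      norm_num
      linarith
    · have hws : wsum ℓ (fun k => Q.v k ∈ A) = ℓ 1 := by
        unfold wsum
        rw [Finset.sum_filter, Fin.sum_univ_three, if_neg p0, if_pos p1, if_neg p2]
        ring
      rw [hws]
      have hL1 : 0 ≤ ℓ 1 := by linarith
      have := mul_le_mul_of_nonneg_right hone hL1
      linarith
    · have hws : wsum ℓ (fun k => Q.v k ∈ A) = ℓ 2 := by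
        unfold wsum
        rw [Finset.sum_filter, Fin.sum_univ_three, if_neg p0, if_neg p1, if_pos p2]
        ring
      rw [hws]
      have hL2 : 0 ≤ ℓ 2 := by linarith
      have := mul_le_mul_of_nonneg_right hone hL2
      linarith
    · have hws : wsum ℓ (fun k => Q.v k ∈ A) = 0 := by
        unfold wsum
        rw [Finset.sum_filter, Fin.sum_univ_three, if_neg p0, if_neg p1, if_neg p2]
        ring
      rw [hws]
      have : (0:ℝ) < (Module.finrank ℝ A.direction : ℝ) + 1 := by linarith
      rw [mul_zero]
      linarith
end
end
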